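/- Let (ρ₁,ρ₂,ρ₃) be a stable representation of the 3-Kronecker quiver of dimension vector (2,3), and define the linear map Φ : S²(ℂ²) → ⋀²(ℂ³) ⊗ ⋀²(ℂ³) by Φ(v·w) = Σ_{1≤k<l≤3} (ρ_k(v) ∧ ρ_l(w) + ρ_k(w) ∧ ρ_l(v)) ⊗ (e_k ∧ e_l), where e₁, e₂, e₃ is the standard basis of the second copy of ℂ³ (indexing the three arrows). Then Φ is injective. -/

import Mathlib

open TensorProduct
open Matrix

noncomputable section

/-- Stability (for the stability parameter θ = (3,−2)) of a representation `(ρ₁,ρ₂,ρ₃)` of the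
3-Kronecker quiver of dimension vector (2,3): for every subrepresentation `(U₁, U₂)` other than
`(0,0)` and `(ℂ², ℂ³)` one has `3·dim U₁ < 2·dim U₂`. -/
def KStable (ρ : Fin 3 → ((Fin 2 → ℂ) →ₗ[ℂ] (Fin 3 → ℂ))) : Prop :=
  ∀ (U₁ : Submodule ℂ (Fin 2 → ℂ)) (U₂ : Submodule ℂ (Fin 3 → ℂ)),
    (∀ k, U₁.map (ρ k) ≤ U₂) →
    ¬(U₁ = ⊥ ∧ U₂ = ⊥) → ¬(U₁ = ⊤ ∧ U₂ = ⊤) →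
    3 * Module.finrank ℂ U₁ < 2 * Module.finrank ℂ U₂

/-- The wedge product `u ∧ v ∈ ⋀²(ℂ³)`. -/
def wedge2 (u v : Fin 3 → ℂ) : ↥(⋀[ℂ]^2 (Fin 3 → ℂ)) :=
  ⟨ExteriorAlgebra.ιMulti ℂ 2 ![u, v],
    ExteriorAlgebra.ιMulti_range ℂ 2 (Set.mem_range_self ![u, v])⟩

/-- For a pair of indices `k, l` (with `k < l` in the intended use), the `(k,l)`-summand
`(ρ_k(v) ∧ ρ_l(w) + ρ_k(w) ∧ ρ_l(v)) ⊗ (e_k ∧ e_l)` of `Φ(v·w)`. -/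
def phiTerm (ρ : Fin 3 → ((Fin 2 → ℂ) →ₗ[ℂ] (Fin 3 → ℂ))) (v w : Fin 2 → ℂ)
    (k l : Fin 3) : ↥(⋀[ℂ]^2 (Fin 3 → ℂ)) ⊗[ℂ] ↥(⋀[ℂ]^2 (Fin 3 → ℂ)) :=
  (wedge2 (ρ k v) (ρ l w) + wedge2 (ρ k w) (ρ l v)) ⊗ₜ[ℂ]
    wedge2 (Pi.single k 1) (Pi.single l 1)

/-- The value `Φ(v·w) = Σ_{1≤k<l≤3} (ρ_k(v) ∧ ρ_l(w) + ρ_k(w) ∧ ρ_l(v)) ⊗ (e_k ∧ e_l)`;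
this is symmetric and bilinear in `(v,w)`, hence defines a linear map
`Φ : S²(ℂ²) → ⋀²(ℂ³) ⊗ ⋀²(ℂ³)`. -/
def phiPure (ρ : Fin 3 → ((Fin 2 → ℂ) →ₗ[ℂ] (Fin 3 → ℂ))) (v w : Fin 2 → ℂ) :
    ↥(⋀[ℂ]^2 (Fin 3 → ℂ)) ⊗[ℂ] ↥(⋀[ℂ]^2 (Fin 3 → ℂ)) :=
  phiTerm ρ v w 0 1 + phiTerm ρ v w 0 2 + phiTerm ρ v w 1 2

def crossAlt : (Fin 3 → ℂ) [⋀^Fin 2]→ₗ[ℂ] (Fin 3 → ℂ) where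
  toFun m := m 0 ⨯₃ m 1
  map_update_add' := by
    intro _ m i x y
    fin_cases i <;> simp
  map_update_smul' := by
    intro _ m i c x
    fin_cases i <;> simp
  map_eq_zero_of_eq' := by
    intro m i j hij hne
    fin_cases i <;> fin_cases j <;> simp_all

def fAlt : ∀ i : ℕ, (Fin 3 → ℂ) [⋀^Fin i]→ₗ[ℂ] (Fin 3 → ℂ) :=
  fun i => match i with
  | 2 => crossAlt
  | _ => 0

def chi : ↥(⋀[ℂ]^2 (Fin 3 → ℂ)) →ₗ[ℂ] (Fin 3 → ℂ) :=
  (ExteriorAlgebra.liftAlternating fAlt).comp (Submodule.subtype _)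

lemma chi_wedge2 (u v : Fin 3 → ℂ) : chi (wedge2 u v) = u ⨯₃ v := by
  show ExteriorAlgebra.liftAlternating fAlt (ExteriorAlgebra.ιMulti ℂ 2 ![u, v]) = _
  rw [ExteriorAlgebra.liftAlternating_apply_ιMulti]
  show crossAlt ![u, v] = _
  simp [crossAlt]

set_option maxHeartbeats 1000000 in
set_option synthInstance.maxHeartbeats 1000000 in
def evalAt (p : Fin 3) :
    (↥(⋀[ℂ]^2 (Fin 3 → ℂ)) ⊗[ℂ] ↥(⋀[ℂ]^2 (Fin 3 → ℂ))) →ₗ[ℂ] (Fin 3 → ℂ) :=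
  TensorProduct.lift (LinearMap.mk₂ ℂ (fun x y => chi y p • chi x)
    (fun x x' y => by rw [chi.map_add, smul_add])
    (fun c x y => by rw [chi.map_smul, smul_comm])
    (fun x y y' => by rw [chi.map_add, Pi.add_apply, add_smul])
    (fun c x y => by rw [chi.map_smul, Pi.smul_apply, smul_eq_mul,
      mul_smul]))

set_option synthInstance.maxHeartbeats 1000000 in
lemma evalAt_tmul (p : Fin 3) (x y : ↥(⋀[ℂ]^2 (Fin 3 → ℂ))) :
    evalAt p (x ⊗ₜ[ℂ] y) = chi y p • chi x := by
  simp [evalAt]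

set_option synthInstance.maxHeartbeats 1000000 in
lemma evalAt_phiTerm (p : Fin 3) (ρ : Fin 3 → ((Fin 2 → ℂ) →ₗ[ℂ] (Fin 3 → ℂ)))
    (v w : Fin 2 → ℂ) (k l : Fin 3) :
    evalAt p (phiTerm ρ v w k l) =
      ((Pi.single k 1 : Fin 3 → ℂ) ⨯₃ (Pi.single l 1 : Fin 3 → ℂ)) p •
        (ρ k v ⨯₃ ρ l w + ρ k w ⨯₃ ρ l v) := by
  rw [phiTerm, evalAt_tmul, chi_wedge2, map_add, chi_wedge2, chi_wedge2]

lemma singleCross01 : ((Pi.single 0 1 : Fin 3 → ℂ) ⨯₃ (Pi.single 1 1 : Fin 3 → ℂ)) =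
    ![0, 0, 1] := by
  funext i
  fin_cases i <;> norm_num [cross_apply, Pi.single_apply] <;> decide

lemma singleCross02 : ((Pi.single 0 1 : Fin 3 → ℂ) ⨯₃ (Pi.single 2 1 : Fin 3 → ℂ)) =
    ![0, -1, 0] := by
  funext i
  fin_cases i <;> norm_num [cross_apply, Pi.single_apply] <;> decide

lemma singleCross12 : ((Pi.single 1 1 : Fin 3 → ℂ) ⨯₃ (Pi.single 2 1 : Fin 3 → ℂ)) =
    ![1, 0, 0] := by
  funext i
  fin_cases i <;> norm_num [cross_apply, Pi.single_apply] <;> decide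

set_option synthInstance.maxHeartbeats 1000000 in
set_option maxHeartbeats 1000000 in
set_option maxHeartbeats 1000000 in
set_option synthInstance.maxHeartbeats 1000000 in
lemma extract (ρ : Fin 3 → ((Fin 2 → ℂ) →ₗ[ℂ] (Fin 3 → ℂ))) (c : Matrix (Fin 2) (Fin 2) ℂ)
    (hc0 : (∑ i : Fin 2, ∑ j : Fin 2,
      c i j • phiPure ρ (Pi.single i 1) (Pi.single j 1)) = 0)
    (k l : Fin 3) (hkl : (k = 0 ∧ l = 1) ∨ (k = 0 ∧ l = 2) ∨ (k = 1 ∧ l = 2)) :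
      (∑ i : Fin 2, ∑ j : Fin 2, c i j •
        (ρ k (Pi.single i 1) ⨯₃ ρ l (Pi.single j 1)
          + ρ k (Pi.single j 1) ⨯₃ ρ l (Pi.single i 1))) = 0 := by
  have key : ∀ p : Fin 3, evalAt p (∑ i : Fin 2, ∑ j : Fin 2,
      c i j • phiPure ρ (Pi.single i 1) (Pi.single j 1)) = 0 := by
    intro p; rw [hc0, map_zero]
  rcases hkl with ⟨rfl, rfl⟩ | ⟨rfl, rfl⟩ | ⟨rfl, rfl⟩
  · have h2 := key 2
    simp only [map_sum, _root_.map_smul, phiPure, map_add, evalAt_phiTerm,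
      singleCross01, singleCross02, singleCross12, Matrix.cons_val_zero, Matrix.cons_val_one,
      Matrix.head_cons, Matrix.cons_val_two, Matrix.tail_cons, zero_smul, one_smul, neg_smul,
      smul_zero, add_zero, zero_add, smul_neg, Fin.sum_univ_two] at h2
    rw [Fin.sum_univ_two]
    simp only [Fin.sum_univ_two]
    linear_combination (norm := module) h2
  · have h1 := key 1
    simp only [map_sum, _root_.map_smul, phiPure, map_add, evalAt_phiTerm,
      singleCross01, singleCross02, singleCross12, Matrix.cons_val_zero, Matrix.cons_val_one,
      Matrix.head_cons, Matrix.cons_val_two, Matrix.tail_cons, zero_smul, one_smul, neg_smul,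
      smul_zero, add_zero, zero_add, smul_neg, Fin.sum_univ_two] at h1
    rw [Fin.sum_univ_two]
    simp only [Fin.sum_univ_two]
    linear_combination (norm := module) -h1
  · have h0 := key 0
    simp only [map_sum, _root_.map_smul, phiPure, map_add, evalAt_phiTerm,
      singleCross01, singleCross02, singleCross12, Matrix.cons_val_zero, Matrix.cons_val_one,
      Matrix.head_cons, Matrix.cons_val_two, Matrix.tail_cons, zero_smul, one_smul, neg_smul,
      smul_zero, add_zero, zero_add, smul_neg, Fin.sum_univ_two] at h0
    rw [Fin.sum_univ_two]
    simp only [Fin.sum_univ_two]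
    linear_combination (norm := module) h0

set_option maxHeartbeats 1000000 in
set_option synthInstance.maxHeartbeats 1000000 in
lemma recomb (ρk ρl : (Fin 2 → ℂ) →ₗ[ℂ] (Fin 3 → ℂ)) (v w : Fin 2 → ℂ) :
    (∑ i : Fin 2, ∑ j : Fin 2, (v i * w j + v j * w i) •
      (ρk (Pi.single i 1) ⨯₃ ρl (Pi.single j 1) + ρk (Pi.single j 1) ⨯₃ ρl (Pi.single i 1)))
      = (2 : ℂ) • (ρk v ⨯₃ ρl w + ρk w ⨯₃ ρl v) := by
  have hv : v = v 0 • (Pi.single 0 1 : Fin 2 → ℂ) + v 1 • (Pi.single 1 1 : Fin 2 → ℂ) := by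
    funext i; fin_cases i <;> simp
  have hw : w = w 0 • (Pi.single 0 1 : Fin 2 → ℂ) + w 1 • (Pi.single 1 1 : Fin 2 → ℂ) := by
    funext i; fin_cases i <;> simp
  conv_rhs => rw [hv, hw]
  simp only [map_add, LinearMap.map_smul, LinearMap.map_smul₂, LinearMap.add_apply,
    LinearMap.smul_apply, Fin.sum_univ_two, smul_add, add_smul, smul_smul]
  module


-- scalar triple product helpers
lemma trip_perm (u v w : Fin 3 → ℂ) : u ⬝ᵥ (v ⨯₃ w) = v ⬝ᵥ (w ⨯₃ u) :=
  triple_product_permutation u v w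

lemma trip_swap (u v w : Fin 3 → ℂ) : u ⬝ᵥ (v ⨯₃ w) = -(v ⬝ᵥ (u ⨯₃ w)) := by
  simp only [cross_apply, vec3_dotProduct, Matrix.cons_val_zero, Matrix.cons_val_one,
    Matrix.head_cons, Matrix.cons_val_two, Matrix.tail_cons]
  ring

-- 27-case bash
lemma all27 (a : Fin 3 → (Fin 3 → ℂ)) (hδ : a 0 ⬝ᵥ (a 1 ⨯₃ a 2) = 0) :
    ∀ p q k, (a p ⨯₃ a q) ⬝ᵥ a k = 0 := by
  intro p q k
  rw [dotProduct_comm]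
  simp only [cross_apply, vec3_dotProduct, Matrix.cons_val_zero, Matrix.cons_val_one,
    Matrix.head_cons, Matrix.cons_val_two, Matrix.tail_cons] at hδ ⊢
  fin_cases p <;> fin_cases q <;> fin_cases k <;>
    simp only [Fin.isValue, Fin.reduceFinMk] <;>
    first
      | linear_combination hδ
      | linear_combination -hδ
      | linear_combination (0 : ℂ)

-- the S = 0 chain
lemma chainS (a b : Fin 3 → (Fin 3 → ℂ)) (h : ∀ k l, a k ⨯₃ b l = a l ⨯₃ b k) :
    ∀ m k l, a m ⬝ᵥ (a k ⨯₃ b l) = 0 := by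
  intro m k l
  have e1 : a m ⬝ᵥ (a k ⨯₃ b l) = -(a k ⬝ᵥ (a m ⨯₃ b l)) := trip_swap _ _ _
  have e2 : a k ⬝ᵥ (a m ⨯₃ b l) = a k ⬝ᵥ (a l ⨯₃ b m) := by rw [h m l]
  have e3 : a k ⬝ᵥ (a l ⨯₃ b m) = -(a l ⬝ᵥ (a k ⨯₃ b m)) := trip_swap _ _ _
  have e4 : a l ⬝ᵥ (a k ⨯₃ b m) = a l ⬝ᵥ (a m ⨯₃ b k) := by rw [h k m]
  have e5 : a l ⬝ᵥ (a m ⨯₃ b k) = -(a m ⬝ᵥ (a l ⨯₃ b k)) := trip_swap _ _ _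
  have e6 : a m ⬝ᵥ (a l ⨯₃ b k) = a m ⬝ᵥ (a k ⨯₃ b l) := by rw [h k l]
  linear_combination (e1 - e2 - e3 + e4 + e5 - e6) / 2

-- x ≠ 0 and x ⨯₃ y = 0 implies y ∈ span {x}
lemma mem_span_of_cross_eq_zero {x y : Fin 3 → ℂ} (hx : x ≠ 0) (h : x ⨯₃ y = 0) :
    y ∈ Submodule.span ℂ {x} := by
  have hni : ¬ LinearIndependent ℂ ![x, y] := by
    rw [← crossProduct_ne_zero_iff_linearIndependent]
    simpa using h
  rw [LinearIndependent.pair_iff] at hni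
  push_neg at hni
  obtain ⟨s, t, hst, hne⟩ := hni
  by_cases ht : t = 0
  · subst ht
    simp only [zero_smul, add_zero, smul_eq_zero] at hst
    rcases hst with hs | hx'
    · exact absurd (hne hs (rfl)) (by exact fun h => h)
    · exact absurd hx' hx
  · rw [Submodule.mem_span_singleton]
    refine ⟨-(t⁻¹ * s), ?_⟩
    have : y = -(t⁻¹ * s) • x := by
      field_simp
      have := congrArg (fun z => t⁻¹ • z) hst
      simp [smul_add, smul_smul, inv_mul_cancel₀ ht] at this
      linear_combination (norm := module) this
    exact this.symm

lemma finrank_span_le_one_of_cross {x y z : Fin 3 → ℂ}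
    (hxy : x ⨯₃ y = 0) (hxz : x ⨯₃ z = 0) (hyz : y ⨯₃ z = 0) :
    Module.finrank ℂ (Submodule.span ℂ ({x, y, z} : Set (Fin 3 → ℂ))) ≤ 1 := by
  have key : ∃ u : Fin 3 → ℂ, x ∈ Submodule.span ℂ {u} ∧ y ∈ Submodule.span ℂ {u} ∧
      z ∈ Submodule.span ℂ {u} := by
    by_cases hx : x = 0
    · by_cases hy : y = 0
      · refine ⟨z, ?_, ?_, Submodule.mem_span_singleton_self z⟩ <;>
          simp [hx, hy]
      · refine ⟨y, ?_, Submodule.mem_span_singleton_self y, ?_⟩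
        · simp [hx]
        · exact mem_span_of_cross_eq_zero hy hyz
    · refine ⟨x, Submodule.mem_span_singleton_self x, ?_, ?_⟩
      · exact mem_span_of_cross_eq_zero hx hxy
      · exact mem_span_of_cross_eq_zero hx hxz
  obtain ⟨u, hxu, hyu, hzu⟩ := key
  have hle : Submodule.span ℂ ({x, y, z} : Set (Fin 3 → ℂ)) ≤ Submodule.span ℂ {u} := by
    rw [Submodule.span_le]
    intro t ht
    rcases ht with rfl | rfl | rfl
    exacts [hxu, hyu, hzu]
  calc Module.finrank ℂ (Submodule.span ℂ ({x, y, z} : Set (Fin 3 → ℂ)))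
      ≤ Module.finrank ℂ (Submodule.span ℂ ({u} : Set (Fin 3 → ℂ))) := Submodule.finrank_mono hle
    _ ≤ 1 := by
        refine (finrank_span_le_card ({u} : Set (Fin 3 → ℂ))).trans ?_
        simp

/-- Stability: for `u ≠ 0`, the vectors `ρ k u` are not all pairwise parallel. -/
lemma not_all_cross_zero (ρ : Fin 3 → ((Fin 2 → ℂ) →ₗ[ℂ] (Fin 3 → ℂ)))
    (hstab : KStable ρ) {u : Fin 2 → ℂ} (hu : u ≠ 0)
    (hall : ∀ k l : Fin 3, ρ k u ⨯₃ ρ l u = 0) : False := by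
  set U₁ : Submodule ℂ (Fin 2 → ℂ) := Submodule.span ℂ {u} with hU₁
  set U₂ : Submodule ℂ (Fin 3 → ℂ) :=
    Submodule.span ℂ ({ρ 0 u, ρ 1 u, ρ 2 u} : Set (Fin 3 → ℂ)) with hU₂
  have hmap : ∀ k, U₁.map (ρ k) ≤ U₂ := by
    intro k
    rw [hU₁, Submodule.map_span, Set.image_singleton, Submodule.span_le]
    intro t ht
    rcases ht with rfl
    apply Submodule.subset_span
    fin_cases k <;> simp
  have hbot : ¬(U₁ = ⊥ ∧ U₂ = ⊥) := by
    rintro ⟨h1, -⟩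
    rw [hU₁, Submodule.span_singleton_eq_bot] at h1
    exact hu h1
  have htop : ¬(U₁ = ⊤ ∧ U₂ = ⊤) := by
    rintro ⟨h1, -⟩
    have h2 : Module.finrank ℂ U₁ = 1 := finrank_span_singleton hu
    rw [h1, finrank_top] at h2
    rw [Module.finrank_fin_fun] at h2
    omega
  have := hstab U₁ U₂ hmap hbot htop
  have hr1 : Module.finrank ℂ U₁ = 1 := finrank_span_singleton hu
  have hr2 : Module.finrank ℂ U₂ ≤ 1 :=
    finrank_span_le_one_of_cross (hall 0 1) (hall 0 2) (hall 1 2)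
  omega

def dotL (z : Fin 3 → ℂ) : (Fin 3 → ℂ) →ₗ[ℂ] ℂ where
  toFun x := z ⬝ᵥ x
  map_add' x y := by simp [dotProduct_add]
  map_smul' c x := by simp

/-- Stability: if `v, w` are linearly independent, the six vectors `ρ k v, ρ k w` span `ℂ³`;
hence a vector orthogonal to all of them is zero. -/
lemma eq_zero_of_dot_all (ρ : Fin 3 → ((Fin 2 → ℂ) →ₗ[ℂ] (Fin 3 → ℂ)))
    (hstab : KStable ρ) {v w : Fin 2 → ℂ} (hind : LinearIndependent ℂ ![v, w])
    (z : Fin 3 → ℂ) (hz : ∀ k : Fin 3, z ⬝ᵥ ρ k v = 0 ∧ z ⬝ᵥ ρ k w = 0) : z = 0 := by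
  have hspanvw : Submodule.span ℂ ({v, w} : Set (Fin 2 → ℂ)) = ⊤ := by
    have hr : Set.range ![v, w] = {v, w} := by
      ext t
      simp [Fin.exists_fin_two]
      tauto
    apply Submodule.eq_top_of_finrank_eq
    rw [← hr, finrank_span_eq_card hind, Module.finrank_fin_fun]
    simp
  set S : Set (Fin 3 → ℂ) := {ρ 0 v, ρ 1 v, ρ 2 v, ρ 0 w, ρ 1 w, ρ 2 w} with hS
  set U₂ : Submodule ℂ (Fin 3 → ℂ) := Submodule.span ℂ S with hU₂
  have hmap : ∀ k, Submodule.map (ρ k) (⊤ : Submodule ℂ (Fin 2 → ℂ)) ≤ U₂ := by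
    intro k
    rintro - ⟨u, -, rfl⟩
    have hu : u ∈ Submodule.span ℂ ({v, w} : Set (Fin 2 → ℂ)) := by rw [hspanvw]; trivial
    obtain ⟨s, t, rfl⟩ := Submodule.mem_span_pair.mp hu
    rw [map_add, LinearMap.map_smul, LinearMap.map_smul]
    have h1 : ρ k v ∈ U₂ := by
      apply Submodule.subset_span; fin_cases k <;> simp [hS]
    have h2 : ρ k w ∈ U₂ := by
      apply Submodule.subset_span; fin_cases k <;> simp [hS]
    exact Submodule.add_mem _ (Submodule.smul_mem _ _ h1) (Submodule.smul_mem _ _ h2)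
  have hU2top : U₂ = ⊤ := by
    by_contra hne
    have := hstab ⊤ U₂ hmap (by rintro ⟨h, -⟩; exact absurd h.symm bot_ne_top)
      (by rintro ⟨-, h⟩; exact hne h)
    rw [finrank_top, Module.finrank_fin_fun] at this
    have hle : Module.finrank ℂ U₂ ≤ 3 := by
      have := Submodule.finrank_le U₂
      rwa [Module.finrank_fin_fun] at this
    omega
  have hker : U₂ ≤ LinearMap.ker (dotL z) := by
    rw [hU₂, Submodule.span_le]
    intro t ht
    simp only [hS, Set.mem_insert_iff, Set.mem_singleton_iff] at ht
    rcases ht with rfl | rfl | rfl | rfl | rfl | rfl <;>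
      simp only [LinearMap.mem_ker, dotL, LinearMap.coe_mk, AddHom.coe_mk] <;>
      first
        | exact (hz 0).1 | exact (hz 1).1 | exact (hz 2).1
        | exact (hz 0).2 | exact (hz 1).2 | exact (hz 2).2
  rw [hU2top, top_le_iff] at hker
  funext i
  have : dotL z (Pi.single i 1) = 0 := by
    rw [← LinearMap.mem_ker, hker]; trivial
  have h2 : z ⬝ᵥ Pi.single i 1 = 0 := this
  rwa [dotProduct_single, mul_one] at h2

lemma main_contra (ρ : Fin 3 → ((Fin 2 → ℂ) →ₗ[ℂ] (Fin 3 → ℂ))) (hstab : KStable ρ)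
    {v w : Fin 2 → ℂ} (hv : v ≠ 0) (hw : w ≠ 0)
    (H : ∀ k l : Fin 3, ρ k v ⨯₃ ρ l w = ρ l v ⨯₃ ρ k w) : False := by
  by_cases hdep : ∃ t : ℂ, v = t • w
  · obtain ⟨t, rfl⟩ := hdep
    have ht : t ≠ 0 := by rintro rfl; simp at hv
    have hall : ∀ k l : Fin 3, ρ k w ⨯₃ ρ l w = 0 := by
      intro k l
      have h := H k l
      simp only [LinearMap.map_smul, LinearMap.smul_apply, LinearMap.map_smul₂] at h
      have h2 : ρ k w ⨯₃ ρ l w = ρ l w ⨯₃ ρ k w := smul_right_injective (Fin 3 → ℂ) ht h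
      have h3 : ρ k w ⨯₃ ρ l w + ρ l w ⨯₃ ρ k w = 0 := cross_anticomm' _ _
      rw [← h2] at h3
      have h4 : (2 : ℂ) • (ρ k w ⨯₃ ρ l w) = 0 := by rw [two_smul]; exact h3
      rcases smul_eq_zero.mp h4 with h5 | h5
      · exact absurd h5 two_ne_zero
      · exact h5
    exact not_all_cross_zero ρ hstab hw hall
  · have hind : LinearIndependent ℂ ![v, w] := by
      rw [linearIndependent_fin2]
      constructor
      · simpa using hw
      · intro a ha
        simp only [Matrix.cons_val_one, Matrix.head_cons, Matrix.cons_val_zero] at ha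
        exact hdep ⟨a, ha.symm⟩
    set a : Fin 3 → (Fin 3 → ℂ) := fun k => ρ k v with ha
    set b : Fin 3 → (Fin 3 → ℂ) := fun k => ρ k w with hb
    have chain1 : ∀ m k l, a m ⬝ᵥ (a k ⨯₃ b l) = 0 := chainS a b H
    have Hsym' : ∀ k l, b k ⨯₃ a l = b l ⨯₃ a k := by
      intro k l
      have h1 : b k ⨯₃ a l = -(a l ⨯₃ b k) := (cross_anticomm _ _).symm
      have h2 : b l ⨯₃ a k = -(a k ⨯₃ b l) := (cross_anticomm _ _).symm
      rw [h1, h2, H l k]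
    have chain2 : ∀ m k l, b m ⬝ᵥ (b k ⨯₃ a l) = 0 := chainS b a Hsym'
    obtain ⟨p, q, hpq⟩ : ∃ p q, a p ⨯₃ a q ≠ 0 := by
      by_contra hc
      push_neg at hc
      exact not_all_cross_zero ρ hstab hv hc
    by_cases hdet : a 0 ⬝ᵥ (a 1 ⨯₃ a 2) = 0
    · have hαa : ∀ k, (a p ⨯₃ a q) ⬝ᵥ a k = 0 := all27 a hdet p q
      have hαb : ∀ l, (a p ⨯₃ a q) ⬝ᵥ b l = 0 := by
        intro l
        rw [dotProduct_comm, trip_perm]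
        exact chain1 p q l
      have : a p ⨯₃ a q = 0 := by
        apply eq_zero_of_dot_all ρ hstab hind
        intro k
        exact ⟨hαa k, hαb k⟩
      exact hpq this
    · obtain ⟨p', q', hb'⟩ : ∃ p q, b p ⨯₃ b q ≠ 0 := by
        by_contra hc
        push_neg at hc
        exact not_all_cross_zero ρ hstab hw hc
      have hβa : ∀ l, a l ⬝ᵥ (b p' ⨯₃ b q') = 0 := by
        intro l
        rw [trip_perm]
        exact chain2 p' q' l
      set M : Matrix (Fin 3) (Fin 3) ℂ := ![a 0, a 1, a 2] with hM
      have hdetM : M.det ≠ 0 := by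
        rw [hM, ← triple_product_eq_det]
        exact hdet
      have hmv : M.mulVec (b p' ⨯₃ b q') = 0 := by
        funext i
        fin_cases i <;>
          simpa [hM, Matrix.mulVec, Pi.zero_apply] using hβa _
      have : b p' ⨯₃ b q' = 0 := by
        have hunit : IsUnit M.det := isUnit_iff_ne_zero.mpr hdetM
        have := congrArg (fun x => M⁻¹.mulVec x) hmv
        simpa [Matrix.mulVec_mulVec, Matrix.nonsing_inv_mul M hunit] using this
      exact hb' this

lemma factor_sym (c : Matrix (Fin 2) (Fin 2) ℂ) (hsymm : c.IsSymm) (hc : c ≠ 0) :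
    ∃ v w : Fin 2 → ℂ, v ≠ 0 ∧ w ≠ 0 ∧ ∀ i j, c i j = v i * w j + v j * w i := by
  have hBA : c 1 0 = c 0 1 := hsymm.apply 0 1
  by_cases ha : c 0 0 ≠ 0
  · obtain ⟨s, hs⟩ := IsAlgClosed.exists_pow_nat_eq (k := ℂ) (c 0 1 ^ 2 - c 0 0 * c 1 1)
      zero_lt_two
    refine ⟨![c 0 0, c 0 1 + s], ![1/2, (c 0 1 - s)/(2 * c 0 0)], ?_, ?_, ?_⟩
    · intro h
      apply ha
      have := congrFun h 0
      simpa using this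
    · intro h
      have := congrFun h 0
      norm_num at this
    · intro i j
      fin_cases i <;> fin_cases j <;>
        simp only [Fin.isValue, Fin.reduceFinMk, Matrix.cons_val_zero, Matrix.cons_val_one,
          Matrix.head_cons, hBA] <;>
        field_simp <;>
        first
          | ring1
          | linear_combination (norm := ring1) hs
          | linear_combination (norm := ring1) -hs
          | linear_combination (norm := ring1) 2*hs
          | linear_combination (norm := ring1) -2*hs
          | linear_combination (norm := ring1) 3*hs
          | linear_combination (norm := ring1) -3*hs
  · push_neg at ha
    by_cases hd : c 1 1 ≠ 0
    · refine ⟨![2 * c 0 1, c 1 1], ![0, 1/2], ?_, ?_, ?_⟩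
      · intro h
        apply hd
        have := congrFun h 1
        simpa using this
      · intro h
        have := congrFun h 1
        norm_num at this
      · intro i j
        fin_cases i <;> fin_cases j <;>
          simp only [Fin.isValue, Fin.reduceFinMk, Matrix.cons_val_zero, Matrix.cons_val_one,
            Matrix.head_cons, hBA] <;>
          first | (rw [ha]; ring) | ring
    · push_neg at hd
      have hb : c 0 1 ≠ 0 := by
        intro hb0
        apply hc
        ext i j
        fin_cases i <;> fin_cases j <;>
          simp only [Fin.isValue, Fin.reduceFinMk, Matrix.zero_apply]
        exacts [ha, hb0, hBA.trans hb0, hd]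
      refine ⟨![1, 0], ![0, c 0 1], ?_, ?_, ?_⟩
      · intro h
        have := congrFun h 0
        norm_num at this
      · intro h
        apply hb
        have := congrFun h 1
        simpa using this
      · intro i j
        fin_cases i <;> fin_cases j <;>
          simp only [Fin.isValue, Fin.reduceFinMk, Matrix.cons_val_zero, Matrix.cons_val_one,
            Matrix.head_cons, hBA] <;>
          first | (rw [ha]; ring) | (rw [hd]; ring) | ring

set_option maxHeartbeats 1000000 in
set_option synthInstance.maxHeartbeats 1000000 in
/-- If `(ρ₁,ρ₂,ρ₃)` is a stable representation of the 3-Kronecker quiver of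
dimension vector `(2,3)`, then the linear map `Φ : S²(ℂ²) → ⋀²(ℂ³) ⊗ ⋀²(ℂ³)` determined by
`Φ(v·w) = Σ_{1≤k<l≤3} (ρ_k(v) ∧ ρ_l(w) + ρ_k(w) ∧ ρ_l(v)) ⊗ (e_k ∧ e_l)` is injective:
identifying `S²(ℂ²)` with symmetric 2×2 coefficient matrices, any symmetric combination of
the values of `Φ` on the basis vectors that vanishes has zero coefficients. -/
theorem stmt11 (ρ : Fin 3 → ((Fin 2 → ℂ) →ₗ[ℂ] (Fin 3 → ℂ))) (hstab : KStable ρ) :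
    ∀ c : Matrix (Fin 2) (Fin 2) ℂ, c.IsSymm →
      (∑ i : Fin 2, ∑ j : Fin 2,
        c i j • phiPure ρ (Pi.single i 1) (Pi.single j 1)) = 0 → c = 0 := by
  intro c hsymm hc0
  by_contra hcne
  obtain ⟨v, w, hv, hw, hvw⟩ := factor_sym c hsymm hcne
  have h01 := extract ρ c hc0 0 1 (Or.inl ⟨rfl, rfl⟩)
  have h02 := extract ρ c hc0 0 2 (Or.inr (Or.inl ⟨rfl, rfl⟩))
  have h12 := extract ρ c hc0 1 2 (Or.inr (Or.inr ⟨rfl, rfl⟩))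
  have conv : ∀ k l : Fin 3,
      (∑ i : Fin 2, ∑ j : Fin 2, c i j •
        (ρ k (Pi.single i 1) ⨯₃ ρ l (Pi.single j 1)
          + ρ k (Pi.single j 1) ⨯₃ ρ l (Pi.single i 1))) = 0 →
      ρ k v ⨯₃ ρ l w + ρ k w ⨯₃ ρ l v = 0 := by
    intro k l h
    have h' : (∑ i : Fin 2, ∑ j : Fin 2, (v i * w j + v j * w i) •
        (ρ k (Pi.single i 1) ⨯₃ ρ l (Pi.single j 1)
          + ρ k (Pi.single j 1) ⨯₃ ρ l (Pi.single i 1))) = 0 := by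
      simp only [← hvw]
      exact h
    rw [recomb] at h'
    rcases smul_eq_zero.mp h' with h'' | h''
    · exact absurd h'' two_ne_zero
    · exact h''
  have S01 := conv 0 1 h01
  have S02 := conv 0 2 h02
  have S12 := conv 1 2 h12
  have sym : ∀ {x y z u : Fin 3 → ℂ}, x ⨯₃ y + z ⨯₃ u = 0 → x ⨯₃ y = u ⨯₃ z := fun h =>
    (eq_neg_of_add_eq_zero_left h).trans (cross_anticomm _ _)
  have H : ∀ k l : Fin 3, ρ k v ⨯₃ ρ l w = ρ l v ⨯₃ ρ k w := by
    intro k l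
    fin_cases k <;> fin_cases l
    exacts [rfl, sym S01, sym S02, (sym S01).symm, rfl, sym S12,
      (sym S02).symm, (sym S12).symm, rfl]
  exact main_contra ρ hstab hv hw H
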